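/- Let 2 ≤ d ≤ d' and 1 ≤ p ≤ q be integers and let N < d·d'. If there exists an N-number USV1Bd in M_{d×d'} (equivalently, an N-number unextendible maximally entangled basis (UMEB) in ℂ^d ⊗ ℂ^{d'}), then there exists a (p·q·d·d' − p·(d·d' − N))-number USV1B(pd) in M_{pd×qd'} (equivalently, a (pqdd' − p(dd'−N))-number UMEB in ℂ^{pd} ⊗ ℂ^{qd'}). -/

import Mathlib

open Matrix Complex Finset

namespace UMEBAux

noncomputable def uroot (m : ℕ) : ℂ := Complex.exp (2 * Real.pi * Complex.I / m)

lemma uroot_prim {m : ℕ} (hm : 0 < m) : IsPrimitiveRoot (uroot m) m :=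
  Complex.isPrimitiveRoot_exp m hm.ne'

lemma uroot_ne_zero (m : ℕ) : uroot m ≠ 0 := Complex.exp_ne_zero _

lemma conj_uroot (m : ℕ) : (starRingEnd ℂ) (uroot m) = (uroot m)⁻¹ := by
  rw [uroot, ← Complex.exp_conj, ← Complex.exp_neg]
  congr 1
  simp [map_div₀, Complex.conj_I, map_ofNat]
  ring

lemma conj_uroot_pow (m k : ℕ) :
    star (uroot m ^ k) = uroot m ^ (-(k : ℤ)) := by
  rw [_root_.zpow_neg, zpow_natCast, star_pow, Complex.star_def, conj_uroot, inv_pow]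

lemma sum_uroot_zpow {m : ℕ} (hm : 0 < m) (c : ℤ) :
    ∑ n ∈ Finset.range m, uroot m ^ (c * n) = if (m : ℤ) ∣ c then (m : ℂ) else 0 := by
  have hprim := uroot_prim hm
  by_cases hc : (m : ℤ) ∣ c
  · rw [if_pos hc]
    rw [Finset.sum_congr rfl (fun n _ => (hprim.zpow_eq_one_iff_dvd _).mpr (hc.mul_right _))]
    simp
  · rw [if_neg hc]
    have h1 : uroot m ^ c ≠ 1 := fun h => hc ((hprim.zpow_eq_one_iff_dvd _).mp h)
    have h2 : ∀ n ∈ Finset.range m, uroot m ^ (c * n) = (uroot m ^ c) ^ n := by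
      intro n _
      rw [← zpow_natCast (uroot m ^ c) n, ← _root_.zpow_mul]
    rw [Finset.sum_congr rfl h2, geom_sum_eq h1]
    have h3 : (uroot m ^ c) ^ m = 1 := by
      rw [← zpow_natCast (uroot m ^ c) m, ← _root_.zpow_mul, mul_comm, _root_.zpow_mul,
        zpow_natCast, hprim.pow_eq_one, _root_.one_zpow]
    rw [h3]
    simp
lemma sum_uroot_fin {m : ℕ} (hm : 0 < m) (a b : Fin m) :
    ∑ n : Fin m, uroot m ^ ((((a : ℕ) : ℤ) - ((b : ℕ) : ℤ)) * ((n : ℕ) : ℤ)) =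
      if a = b then (m : ℂ) else 0 := by
  have hiff : (m : ℤ) ∣ ((a : ℕ) : ℤ) - ((b : ℕ) : ℤ) ↔ a = b := by
    constructor
    · intro hdvd
      have ha := a.is_lt
      have hb := b.is_lt
      have h1 : ((a : ℕ) : ℤ) - ((b : ℕ) : ℤ) = 0 :=
        Int.eq_zero_of_abs_lt_dvd hdvd (by rw [abs_lt]; omega)
      exact Fin.ext (by omega)
    · rintro rfl; simp
  rw [Fin.sum_univ_eq_sum_range
    (fun n : ℕ => uroot m ^ ((((a : ℕ) : ℤ) - ((b : ℕ) : ℤ)) * (n : ℤ))),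
    sum_uroot_zpow hm, if_congr hiff rfl rfl]

lemma fourier_inv {m : ℕ} (hm : 0 < m) (f : Fin m → ℂ)
    (h : ∀ s : Fin m, ∑ j : Fin m, uroot m ^ (-(((j : ℕ) * (s : ℕ) : ℕ) : ℤ)) * f j = 0) :
    ∀ j, f j = 0 := by
  intro j0
  have key : ∑ s : Fin m, uroot m ^ (((j0 : ℕ) * (s : ℕ) : ℕ) : ℤ) *
      (∑ j : Fin m, uroot m ^ (-(((j : ℕ) * (s : ℕ) : ℕ) : ℤ)) * f j) = 0 :=
    Finset.sum_eq_zero fun s _ => by rw [h s, mul_zero]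
  have key2 : ∑ j : Fin m,
      (∑ s : Fin m, uroot m ^ ((((j0 : ℕ) : ℤ) - ((j : ℕ) : ℤ)) * ((s : ℕ) : ℤ))) * f j = 0 := by
    rw [← key]
    simp only [Finset.mul_sum, Finset.sum_mul]
    conv_rhs => rw [Finset.sum_comm]
    refine Finset.sum_congr rfl fun j _ => Finset.sum_congr rfl fun s _ => ?_
    rw [← mul_assoc, ← _root_.zpow_add₀ (uroot_ne_zero m)]
    congr 2
    push_cast
    ring
  rw [Finset.sum_congr rfl (fun j _ => by rw [sum_uroot_fin hm j0 j])] at key2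
  simp only [ite_mul, zero_mul, Finset.sum_ite_eq, Finset.mem_univ, if_pos] at key2
  have hm' : (m : ℂ) ≠ 0 := Nat.cast_ne_zero.mpr hm.ne'
  exact (mul_eq_zero.mp key2).resolve_left hm'

lemma trace_conjT_mul {α β : Type*} [Fintype α] [Fintype β]
    (M N : Matrix α β ℂ) :
    (Mᴴ * N).trace = ∑ j : α, ∑ k : β, star (M j k) * N j k := by
  rw [Matrix.trace]
  simp only [Matrix.diag, mul_apply, conjTranspose_apply]
  exact Finset.sum_comm

lemma sum_ite_coe {n : ℕ} (c : ℕ) (hc : c < n) (f : Fin n → ℂ) :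
    (∑ k : Fin n, (if (k : ℕ) = c then f k else 0)) = f ⟨c, hc⟩ := by
  rw [Finset.sum_eq_single (⟨c, hc⟩ : Fin n)]
  · simp
  · intro k _ hk
    rw [if_neg]
    exact fun hh => hk (Fin.ext hh)
  · simp
noncomputable def W (m n : ℕ) (s : Fin m) (t : Fin n) : Matrix (Fin m) (Fin n) ℂ :=
  Matrix.of fun j k =>
    if (k : ℕ) = ((j : ℕ) + (t : ℕ)) % n then uroot m ^ ((j : ℕ) * (s : ℕ)) else 0

lemma mod_cancel {n : ℕ} {j j' t : ℕ} (hj : j < n) (hj' : j' < n)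
    (h : (j + t) % n = (j' + t) % n) : j = j' := by
  have h2 : j % n = j' % n := Nat.ModEq.add_right_cancel' t h
  rwa [Nat.mod_eq_of_lt hj, Nat.mod_eq_of_lt hj'] at h2

lemma mod_cancel_left {n : ℕ} {j t t' : ℕ} (ht : t < n) (ht' : t' < n)
    (h : (j + t) % n = (j + t') % n) : t = t' := by
  apply mod_cancel ht ht' (t := j)
  rwa [Nat.add_comm t j, Nat.add_comm t' j]

lemma W_mul_conjT {m n : ℕ} (hmn : m ≤ n) (s : Fin m) (t : Fin n) :
    W m n s t * (W m n s t)ᴴ = 1 := by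
  have hn : 0 < n := t.pos
  ext j j'
  rw [mul_apply]
  simp only [W, conjTranspose_apply, Matrix.of_apply]
  by_cases hjj : j = j'
  · subst hjj
    have key : ∀ k : Fin n, (if (k : ℕ) = ((j : ℕ) + (t : ℕ)) % n
          then uroot m ^ ((j : ℕ) * (s : ℕ)) else 0) *
        star (if (k : ℕ) = ((j : ℕ) + (t : ℕ)) % n
          then uroot m ^ ((j : ℕ) * (s : ℕ)) else 0) =
        if (k : ℕ) = ((j : ℕ) + (t : ℕ)) % n
          then uroot m ^ ((j : ℕ) * (s : ℕ)) * star (uroot m ^ ((j : ℕ) * (s : ℕ)))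
          else 0 := by
      intro k; split_ifs <;> simp
    rw [Finset.sum_congr rfl fun k _ => key k,
      sum_ite_coe _ (Nat.mod_lt _ hn) (fun _ => _)]
    rw [conj_uroot_pow, ← zpow_natCast (uroot m) ((j : ℕ) * (s : ℕ)),
      ← _root_.zpow_add₀ (uroot_ne_zero m), add_neg_cancel, zpow_zero, one_apply_eq]
  · rw [one_apply_ne hjj]
    refine Finset.sum_eq_zero fun k _ => ?_
    rcases eq_or_ne ((k : ℕ)) (((j : ℕ) + (t : ℕ)) % n) with h1 | h1
    · have h2 : ¬ ((k : ℕ) = ((j' : ℕ) + (t : ℕ)) % n) := by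
        intro h2
        exact hjj (Fin.ext (mod_cancel (lt_of_lt_of_le j.is_lt hmn)
          (lt_of_lt_of_le j'.is_lt hmn) (h1.symm.trans h2)))
      simp [h2]
    · simp [h1]

lemma trace_W {m n : ℕ} (hm : 0 < m) (s s' : Fin m) (t t' : Fin n) :
    ((W m n s t)ᴴ * W m n s' t').trace =
      if s = s' ∧ t = t' then (m : ℂ) else 0 := by
  have hn : 0 < n := t.pos
  rw [trace_conjT_mul]
  simp only [W, Matrix.of_apply]
  by_cases htt : t = t'
  · subst htt
    have key : ∀ j : Fin m, ∑ k : Fin n,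
        star (if (k : ℕ) = ((j : ℕ) + (t : ℕ)) % n
          then uroot m ^ ((j : ℕ) * (s : ℕ)) else 0) *
        (if (k : ℕ) = ((j : ℕ) + (t : ℕ)) % n
          then uroot m ^ ((j : ℕ) * (s' : ℕ)) else 0) =
        uroot m ^ ((((s' : ℕ) : ℤ) - ((s : ℕ) : ℤ)) * ((j : ℕ) : ℤ)) := by
      intro j
      have hc : ∀ k : Fin n, star (if (k : ℕ) = ((j : ℕ) + (t : ℕ)) % n
            then uroot m ^ ((j : ℕ) * (s : ℕ)) else 0) *
          (if (k : ℕ) = ((j : ℕ) + (t : ℕ)) % n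
            then uroot m ^ ((j : ℕ) * (s' : ℕ)) else 0) =
          if (k : ℕ) = ((j : ℕ) + (t : ℕ)) % n
            then star (uroot m ^ ((j : ℕ) * (s : ℕ))) *
              uroot m ^ ((j : ℕ) * (s' : ℕ)) else 0 := by
        intro k; split_ifs <;> simp
      rw [Finset.sum_congr rfl fun k _ => hc k,
        sum_ite_coe _ (Nat.mod_lt _ hn) (fun _ => _)]
      rw [conj_uroot_pow, ← zpow_natCast (uroot m) ((j : ℕ) * (s' : ℕ)),
        ← _root_.zpow_add₀ (uroot_ne_zero m)]
      congr 1
      push_cast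
      ring
    rw [Finset.sum_congr rfl fun j _ => key j, sum_uroot_fin hm s' s]
    by_cases hss : s = s'
    · simp [hss]
    · rw [if_neg (fun hh => hss hh.symm), if_neg (by tauto)]
  · rw [if_neg (by tauto)]
    refine Finset.sum_eq_zero fun j _ => Finset.sum_eq_zero fun k _ => ?_
    rcases eq_or_ne ((k : ℕ)) (((j : ℕ) + (t : ℕ)) % n) with h1 | h1
    · have h2 : ¬ ((k : ℕ) = ((j : ℕ) + (t' : ℕ)) % n) := by
        intro h2
        exact htt (Fin.ext (mod_cancel_left t.is_lt t'.is_lt (h1.symm.trans h2)))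
      simp [h2]
    · simp [h1]

lemma W_span {m n : ℕ} (hm : 0 < m) (hmn : m ≤ n)
    (X : Matrix (Fin m) (Fin n) ℂ)
    (h : ∀ s t, ((W m n s t)ᴴ * X).trace = 0) : X = 0 := by
  have hn : 0 < n := lt_of_lt_of_le hm hmn
  ext j0 k0
  have hjn : (j0 : ℕ) < n := lt_of_lt_of_le j0.is_lt hmn
  set tv : ℕ := (n + (k0 : ℕ) - (j0 : ℕ)) % n with htv
  have htvlt : tv < n := Nat.mod_lt _ hn
  have hmod : ∀ j : Fin m, ((j : ℕ) + tv) % n = ((j : ℕ) + (n + (k0 : ℕ) - (j0 : ℕ))) % n := by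
    intro j
    conv_lhs => rw [Nat.add_mod]
    conv_rhs => rw [Nat.add_mod]
    rw [Nat.mod_mod_of_dvd _ dvd_rfl]
  have hsolve : ((j0 : ℕ) + tv) % n = (k0 : ℕ) := by
    rw [hmod j0]
    have : (j0 : ℕ) + (n + (k0 : ℕ) - (j0 : ℕ)) = n + (k0 : ℕ) := by omega
    rw [this, Nat.add_mod_left, Nat.mod_eq_of_lt k0.is_lt]
  set t : Fin n := ⟨tv, htvlt⟩ with ht
  have key : ∀ s : Fin m, ∑ j : Fin m,
      uroot m ^ (-(((j : ℕ) * (s : ℕ) : ℕ) : ℤ)) *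
        X j ⟨((j : ℕ) + tv) % n, Nat.mod_lt _ hn⟩ = 0 := by
    intro s
    have h1 := h s t
    rw [trace_conjT_mul] at h1
    rw [← h1]
    refine Finset.sum_congr rfl fun j _ => ?_
    have hc : ∀ k : Fin n, star (W m n s t j k) * X j k =
        if (k : ℕ) = ((j : ℕ) + tv) % n
          then star (uroot m ^ ((j : ℕ) * (s : ℕ))) * X j k else 0 := by
      intro k
      simp only [W, Matrix.of_apply, ht]
      split_ifs <;> simp
    rw [Finset.sum_congr rfl fun k _ => hc k,
      sum_ite_coe _ (Nat.mod_lt _ hn) (fun k => star (uroot m ^ ((j : ℕ) * (s : ℕ))) * X j k),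
      conj_uroot_pow]
  have hz := fourier_inv hm _ key j0
  simp only [Matrix.zero_apply]
  have : (⟨((j0 : ℕ) + tv) % n, Nat.mod_lt _ hn⟩ : Fin n) = k0 := Fin.ext hsolve
  rwa [this] at hz
open Kronecker in
lemma kron_conjT {p q d d' : ℕ} (V : Matrix (Fin p) (Fin q) ℂ)
    (X : Matrix (Fin d) (Fin d') ℂ) : (V ⊗ₖ X)ᴴ = Vᴴ ⊗ₖ Xᴴ := by
  ext ⟨k, b⟩ ⟨j, a⟩
  simp [Matrix.kroneckerMap_apply, conjTranspose_apply, star_mul']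

open Kronecker in
lemma trace_kron_block {p q d d' : ℕ} (V : Matrix (Fin p) (Fin q) ℂ)
    (X : Matrix (Fin d) (Fin d') ℂ)
    (B : Matrix (Fin p × Fin d) (Fin q × Fin d') ℂ) :
    ((V ⊗ₖ X)ᴴ * B).trace
      = ∑ j : Fin p, ∑ k : Fin q, star (V j k) *
          ((Xᴴ * (B.submatrix (Prod.mk j) (Prod.mk k))).trace) := by
  rw [trace_conjT_mul]
  rw [Fintype.sum_prod_type]
  simp_rw [Fintype.sum_prod_type, trace_conjT_mul, Finset.mul_sum,
    Matrix.kroneckerMap_apply, Matrix.submatrix_apply, star_mul']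
  refine Finset.sum_congr rfl fun j _ => ?_
  rw [Finset.sum_comm]
  refine Finset.sum_congr rfl fun k _ => Finset.sum_congr rfl fun a _ =>
    Finset.sum_congr rfl fun b _ => by ring

lemma trace_submatrix_equiv' {α β : Type*} [Fintype α] [Fintype β]
    (e : α ≃ β) (M : Matrix β β ℂ) :
    (M.submatrix e e).trace = M.trace := by
  rw [Matrix.trace, Matrix.trace]
  exact Equiv.sum_comp e (fun b => M.diag b)
open Kronecker in
lemma main_block {d d' p q N : ℕ} (hd : 2 ≤ d) (hdd : d ≤ d') (hp : 1 ≤ p) (hpq : p ≤ q)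
    (A : Fin N → Matrix (Fin d) (Fin d') ℂ)
    (hA1 : ∀ i, A i * (A i)ᴴ = 1)
    (hA2 : ∀ i j, ((A i)ᴴ * A j).trace = if i = j then (d : ℂ) else 0)
    (hA3 : ∀ B : Matrix (Fin d) (Fin d') ℂ,
      (∀ i, ((A i)ᴴ * B).trace = 0) → ¬ (B * Bᴴ = 1)) :
    ∃ F : (Fin p × Fin N) ⊕ (Fin p × Fin (q - 1) × Fin d × Fin d') →
        Matrix (Fin p × Fin d) (Fin q × Fin d') ℂ,
      (∀ s, F s * (F s)ᴴ = 1) ∧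
      (∀ s t, ((F s)ᴴ * F t).trace = if s = t then ((p * d : ℕ) : ℂ) else 0) ∧
      (∀ B, (∀ s, ((F s)ᴴ * B).trace = 0) → ¬ (B * Bᴴ = 1)) := by
  have hp0 : 0 < p := hp
  have hq0 : 0 < q := lt_of_lt_of_le hp0 hpq
  have hd0 : 0 < d := by omega
  have hd'0 : 0 < d' := lt_of_lt_of_le hd0 hdd
  set t0 : Fin q := ⟨0, hq0⟩ with ht0
  set tm : Fin (q - 1) → Fin q := fun m' => ⟨(m' : ℕ) + 1, by omega⟩ with htm
  set ι : Fin p → Fin q := fun j => ⟨(j : ℕ), lt_of_lt_of_le j.is_lt hpq⟩ with hι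
  refine ⟨Sum.elim (fun x : Fin p × Fin N => W p q x.1 t0 ⊗ₖ A x.2)
      (fun x : Fin p × Fin (q - 1) × Fin d × Fin d' =>
        W p q x.1 (tm x.2.1) ⊗ₖ W d d' x.2.2.1 x.2.2.2), ?_, ?_, ?_⟩
  · rintro (⟨x, i⟩ | ⟨x, m', a, b⟩)
    · simp only [Sum.elim_inl, Sum.elim_inr]
      rw [kron_conjT, ← Matrix.mul_kronecker_mul, W_mul_conjT hpq, hA1,
        Matrix.one_kronecker_one]
    · simp only [Sum.elim_inl, Sum.elim_inr]
      rw [kron_conjT, ← Matrix.mul_kronecker_mul, W_mul_conjT hpq, W_mul_conjT hdd,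
        Matrix.one_kronecker_one]
  · have htm0 : ∀ m', t0 ≠ tm m' := by
      intro m' hh
      rw [ht0, htm, Fin.ext_iff] at hh
      simp at hh
    have htminj : ∀ m1 m2, tm m1 = tm m2 ↔ m1 = m2 := by
      intro m1 m2
      rw [htm, Fin.ext_iff, Fin.ext_iff]
      simp
    rintro (⟨x, i⟩ | ⟨x, m1, a1, b1⟩) (⟨y, j⟩ | ⟨y, m2, a2, b2⟩)
    · simp only [Sum.elim_inl, Sum.elim_inr]
      rw [kron_conjT, ← Matrix.mul_kronecker_mul, Matrix.trace_kronecker, trace_W hp0, hA2]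
      by_cases hxy : x = y <;> by_cases hij : i = j <;>
        simp [hxy, hij, Prod.ext_iff, Nat.cast_mul]
    · simp only [Sum.elim_inl, Sum.elim_inr]
      rw [kron_conjT, ← Matrix.mul_kronecker_mul, Matrix.trace_kronecker, trace_W hp0]
      rw [if_neg (by exact fun hh => htm0 m2 hh.2), zero_mul, if_neg (by simp)]
    · simp only [Sum.elim_inl, Sum.elim_inr]
      rw [kron_conjT, ← Matrix.mul_kronecker_mul, Matrix.trace_kronecker, trace_W hp0]
      rw [if_neg (by exact fun hh => htm0 m1 hh.2.symm), zero_mul, if_neg (by simp)]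
    · simp only [Sum.elim_inl, Sum.elim_inr]
      rw [kron_conjT, ← Matrix.mul_kronecker_mul, Matrix.trace_kronecker, trace_W hp0,
        trace_W hd0]
      by_cases h1 : x = y <;> by_cases h2 : m1 = m2 <;> by_cases h3 : a1 = a2 <;>
        by_cases h4 : b1 = b2 <;>
        simp [h1, h2, h3, h4, htminj, Prod.ext_iff, Nat.cast_mul]
  · intro B hB hBB
    -- Step A: off-diagonal blocks vanish
    have hoff : ∀ (j : Fin p) (k : Fin q), (j : ℕ) ≠ (k : ℕ) →
        B.submatrix (Prod.mk j) (Prod.mk k) = 0 := by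
      intro j k hjk
      have hj : (j : ℕ) < q := lt_of_lt_of_le j.is_lt hpq
      have hk := k.is_lt
      set u : ℕ := if (j : ℕ) < (k : ℕ) then (k : ℕ) - (j : ℕ)
        else q + (k : ℕ) - (j : ℕ) with hu
      have hu1 : 1 ≤ u := by rw [hu]; split_ifs <;> omega
      have hu2 : u ≤ q - 1 := by rw [hu]; split_ifs <;> omega
      have hmodu : ∀ j' : Fin p, (j' : ℕ) = (j : ℕ) →
          ((j' : ℕ) + u) % q = (k : ℕ) := by
        intro j' hj'
        rw [hj', hu]; split_ifs with hlt
        · rw [(by omega : (j : ℕ) + ((k : ℕ) - (j : ℕ)) = (k : ℕ)), Nat.mod_eq_of_lt hk]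
        · rw [(by omega : (j : ℕ) + (q + (k : ℕ) - (j : ℕ)) = q + (k : ℕ)),
            Nat.add_mod_left, Nat.mod_eq_of_lt hk]
      set m' : Fin (q - 1) := ⟨u - 1, by omega⟩ with hm'
      have htmm : ((tm m' : Fin q) : ℕ) = u := by
        rw [htm]; simp [hm']; omega
      apply W_span hd0 hdd
      intro a b
      have key : ∀ s : Fin p, ∑ j' : Fin p,
          uroot p ^ (-(((j' : ℕ) * (s : ℕ) : ℕ) : ℤ)) *
            ((W d d' a b)ᴴ * B.submatrix (Prod.mk j')
              (Prod.mk (⟨((j' : ℕ) + u) % q, Nat.mod_lt _ hq0⟩ : Fin q))).trace = 0 := by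
        intro s
        have h1 : ((W p q s (tm m') ⊗ₖ W d d' a b)ᴴ * B).trace = 0 := hB (Sum.inr (s, m', a, b))
        rw [trace_kron_block] at h1
        rw [← h1]
        refine Finset.sum_congr rfl fun j' _ => ?_
        have hc : ∀ k' : Fin q, star (W p q s (tm m') j' k') *
            ((W d d' a b)ᴴ * B.submatrix (Prod.mk j') (Prod.mk k')).trace =
            if (k' : ℕ) = ((j' : ℕ) + u) % q
              then star (uroot p ^ ((j' : ℕ) * (s : ℕ))) *
                ((W d d' a b)ᴴ * B.submatrix (Prod.mk j') (Prod.mk k')).trace else 0 := by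
          intro k'
          have hueq : u - 1 + 1 = u := by omega
          simp only [W, Matrix.of_apply, htmm, hueq]
          split_ifs <;> simp
        rw [Finset.sum_congr rfl fun k' _ => hc k',
          sum_ite_coe _ (Nat.mod_lt _ hq0) _, conj_uroot_pow]
      have hz := fourier_inv hp0 _ key j
      rwa [show (⟨((j : ℕ) + u) % q, Nat.mod_lt _ hq0⟩ : Fin q) = k from
        Fin.ext (hmodu j rfl)] at hz
    -- Step B: diagonal blocks orthogonal to all A i
    have hmod0 : ∀ j' : Fin p, ((j' : ℕ) + ((t0 : Fin q) : ℕ)) % q = (j' : ℕ) := by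
      intro j'
      rw [show ((t0 : Fin q) : ℕ) = 0 from rfl, Nat.add_zero,
        Nat.mod_eq_of_lt (lt_of_lt_of_le j'.is_lt hpq)]
    have hdiagtr : ∀ (i : Fin N) (j : Fin p),
        ((A i)ᴴ * B.submatrix (Prod.mk j) (Prod.mk (ι j))).trace = 0 := by
      intro i j
      have key : ∀ s : Fin p, ∑ j' : Fin p,
          uroot p ^ (-(((j' : ℕ) * (s : ℕ) : ℕ) : ℤ)) *
            ((A i)ᴴ * B.submatrix (Prod.mk j') (Prod.mk (ι j'))).trace = 0 := by
        intro s
        have h1 : ((W p q s t0 ⊗ₖ A i)ᴴ * B).trace = 0 := hB (Sum.inl (s, i))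
        rw [trace_kron_block] at h1
        rw [← h1]
        refine Finset.sum_congr rfl fun j' _ => ?_
        have hc : ∀ k' : Fin q, star (W p q s t0 j' k') *
            ((A i)ᴴ * B.submatrix (Prod.mk j') (Prod.mk k')).trace =
            if (k' : ℕ) = ((j' : ℕ) + ((t0 : Fin q) : ℕ)) % q
              then star (uroot p ^ ((j' : ℕ) * (s : ℕ))) *
                ((A i)ᴴ * B.submatrix (Prod.mk j') (Prod.mk k')).trace else 0 := by
          intro k'
          simp only [W, Matrix.of_apply]
          split_ifs <;> simp
        rw [Finset.sum_congr rfl fun k' _ => hc k',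
          sum_ite_coe _ (Nat.mod_lt _ hq0) _, conj_uroot_pow,
          show (⟨((j' : ℕ) + ((t0 : Fin q) : ℕ)) % q, Nat.mod_lt _ hq0⟩ : Fin q) = ι j' from
            Fin.ext (hmod0 j')]
      exact fourier_inv hp0 _ key j
    -- Step C: the first diagonal block contradicts unextendibility of A
    set j0 : Fin p := ⟨0, hp0⟩ with hj0
    set D : Matrix (Fin d) (Fin d') ℂ := B.submatrix (Prod.mk j0) (Prod.mk (ι j0)) with hD
    refine hA3 D (fun i => hdiagtr i j0) ?_
    ext a a'
    have h1 : (B * Bᴴ) (j0, a) (j0, a') = (1 : Matrix _ _ ℂ) (j0, a) (j0, a') := by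
      rw [hBB]
    rw [mul_apply, Fintype.sum_prod_type] at h1
    rw [Finset.sum_eq_single (ι j0) (fun k _ hk => ?_) (by simp)] at h1
    swap
    · refine Finset.sum_eq_zero fun b _ => ?_
      have hk' : (j0 : ℕ) ≠ (k : ℕ) := by
        intro hh
        exact hk (Fin.ext (by rw [hι]; exact hh.symm))
      have hBz : B (j0, a) (k, b) = 0 := by
        have h2 := congrFun (congrFun (hoff j0 k hk') a) b
        simpa [Matrix.submatrix_apply] using h2
      rw [hBz, zero_mul]
    have h2 : ((1 : Matrix (Fin p × Fin d) (Fin p × Fin d) ℂ)) (j0, a) (j0, a') =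
        (1 : Matrix (Fin d) (Fin d) ℂ) a a' := by
      by_cases haa : a = a' <;> simp [one_apply, haa, Prod.ext_iff]
    rw [h2] at h1
    rw [← h1, mul_apply]
    exact Finset.sum_congr rfl fun b _ => by
      simp [hD, conjTranspose_apply, Matrix.submatrix_apply]
end UMEBAux

open UMEBAux in
/-- Corollary 4.2: if there is an `N`-number UMEB in `ℂ^d ⊗ ℂ^{d'}`
(as an `N`-number USV1Bd in `M_{d×d'}`, where a `d`-singular-value-1 matrix `A` is
characterized by `A·Aᴴ = I_d`), then there is a `(pqdd' - p(dd'-N))`-number UMEB in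
`ℂ^{pd} ⊗ ℂ^{qd'}` for `p ≤ q`. -/
theorem umeb_recursive (d d' p q N : ℕ)
    (hd : 2 ≤ d) (hdd : d ≤ d') (hp : 1 ≤ p) (hpq : p ≤ q) (hN : N < d * d')
    (h : ∃ A : Fin N → Matrix (Fin d) (Fin d') ℂ,
      (∀ i, A i * (A i)ᴴ = 1) ∧
      (∀ i j, ((A i)ᴴ * A j).trace = if i = j then (d : ℂ) else 0) ∧
      (∀ B : Matrix (Fin d) (Fin d') ℂ,
        (∀ i, ((A i)ᴴ * B).trace = 0) → ¬ (B * Bᴴ = 1))) :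
    ∃ C : Fin (p * q * d * d' - p * (d * d' - N)) →
        Matrix (Fin (p * d)) (Fin (q * d')) ℂ,
      (∀ x, C x * (C x)ᴴ = 1) ∧
      (∀ x y, ((C x)ᴴ * C y).trace = if x = y then ((p * d : ℕ) : ℂ) else 0) ∧
      (∀ B : Matrix (Fin (p * d)) (Fin (q * d')) ℂ,
        (∀ x, ((C x)ᴴ * B).trace = 0) → ¬ (B * Bᴴ = 1)) := by
  obtain ⟨A, hA1, hA2, hA3⟩ := h
  obtain ⟨F, hF1, hF2, hF3⟩ := main_block hd hdd hp hpq A hA1 hA2 hA3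
  have hNle : N ≤ d * d' := le_of_lt hN
  have hcard : Fintype.card (Fin (p * q * d * d' - p * (d * d' - N))) =
      Fintype.card ((Fin p × Fin N) ⊕ (Fin p × Fin (q - 1) × Fin d × Fin d')) := by
    simp only [Fintype.card_fin, Fintype.card_sum, Fintype.card_prod]
    obtain ⟨q', rfl⟩ : ∃ q', q = q' + 1 := ⟨q - 1, by omega⟩
    have h1 : p * (q' + 1) * d * d' = q' * (d * d') * p + p * (d * d') := by ring
    have e3 : p * (d * d' - N) + p * N = p * (d * d') := by
      rw [← Nat.mul_add, Nat.sub_add_cancel hNle]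
    have h4 : p * ((q' + 1 - 1) * (d * d')) = q' * (d * d') * p := by
      simp only [Nat.add_sub_cancel]; ring
    have key : ∀ T X Y Z : ℕ, Y + Z = X → T + X - Y = Z + T := by intros; omega
    rw [h1, h4]
    exact key _ _ _ _ e3
  let e := Fintype.equivOfCardEq hcard
  let e₁ : Fin p × Fin d ≃ Fin (p * d) := finProdFinEquiv
  let e₂ : Fin q × Fin d' ≃ Fin (q * d') := finProdFinEquiv
  refine ⟨fun x => (F (e x)).submatrix e₁.symm e₂.symm, ?_, ?_, ?_⟩
  · intro x
    rw [conjTranspose_submatrix, submatrix_mul_equiv, hF1, submatrix_one_equiv]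
  · intro x y
    rw [conjTranspose_submatrix, submatrix_mul_equiv, trace_submatrix_equiv', hF2]
    simp [e.apply_eq_iff_eq]
  · intro B' hB' hBB'
    refine hF3 (B'.submatrix e₁ e₂) (fun s => ?_) ?_
    · have hx := hB' (e.symm s)
      simp only [Equiv.apply_symm_apply] at hx
      have hB'eq : B' = (B'.submatrix e₁ e₂).submatrix e₁.symm e₂.symm := by
        rw [Matrix.submatrix_submatrix]
        rw [Equiv.self_comp_symm, Equiv.self_comp_symm, Matrix.submatrix_id_id]
      rw [hB'eq, conjTranspose_submatrix, submatrix_mul_equiv, trace_submatrix_equiv'] at hx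
      exact hx
    · rw [conjTranspose_submatrix, submatrix_mul_equiv, hBB', submatrix_one_equiv]
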